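/- Let Q be a finite faithful quandle and let α be a minimal congruence of Q. Then α equals the orbit relation O_{Dis_α} of the subgroup Dis_α (i.e., x α y iff n(x) = y for some n ∈ Dis_α), and Dis_α is a minimal nontrivial normal subgroup of LMlt(Q): Dis_α ≠ 1, Dis_α is normal in LMlt(Q), and every normal subgroup of LMlt(Q) properly contained in Dis_α is trivial. -/

import Mathlib

/-- A quandle structure on `Q`, given by its left translations: each `L x` is a
permutation of `Q`, `x * x = x`, and `x * (y * z) = (x * y) * (x * z)`
(writing `x * y` for `L x y`). -/
structure QuandleStr (Q : Type*) where
  L : Q → Equiv.Perm Q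
  idem : ∀ x : Q, L x x = x
  selfDistrib : ∀ x y z : Q, L x (L y z) = L (L x y) (L x z)

namespace QuandleStr

variable {Q : Type*} (S : QuandleStr Q)

/-- The left multiplication group `LMlt(Q)`, generated by all left translations. -/
def Lmlt : Subgroup (Equiv.Perm Q) :=
  Subgroup.closure (Set.range S.L)

/-- The displacement group `Dis(Q)`, generated by all `L x * (L y)⁻¹`. -/
def Dis : Subgroup (Equiv.Perm Q) :=
  Subgroup.closure {g : Equiv.Perm Q | ∃ x y : Q, g = S.L x * (S.L y)⁻¹}

/-- A congruence of the quandle: an equivalence relation compatible with `*` and `\`. -/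
def IsCong (θ : Setoid Q) : Prop :=
  ∀ x y u v : Q, θ.r x y → θ.r u v →
    θ.r (S.L x u) (S.L y v) ∧ θ.r ((S.L x)⁻¹ u) ((S.L y)⁻¹ v)

/-- A quandle is faithful if `x ↦ L x` is injective. -/
def Faithful : Prop := Function.Injective S.L

/-- A quandle is connected if `LMlt(Q)` acts transitively. -/
def Connected : Prop := ∀ x y : Q, ∃ g ∈ S.Lmlt, g x = y

/-- A quandle is latin if all right translations are bijective. -/
def Latin : Prop := ∀ y : Q, Function.Bijective fun x : Q => S.L x y

/-- `θ` is a minimal congruence: not equality, and the only congruence strictly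
contained in it is equality. -/
def IsMinCong (θ : Setoid Q) : Prop :=
  S.IsCong θ ∧ θ ≠ ⊥ ∧ ∀ β : Setoid Q, S.IsCong β → β < θ → β = ⊥

/-- `θ` is a maximal congruence: not the all relation, and the only congruence strictly
containing it is the all relation. -/
def IsMaxCong (θ : Setoid Q) : Prop :=
  S.IsCong θ ∧ θ ≠ ⊤ ∧ ∀ β : Setoid Q, S.IsCong β → θ < β → β = ⊤

/-- `Dis_α`: the subgroup generated by the `L x * (L y)⁻¹` with `x α y`. -/
def DisC (r : Q → Q → Prop) : Subgroup (Equiv.Perm Q) :=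
  Subgroup.closure {g : Equiv.Perm Q | ∃ x y : Q, r x y ∧ g = S.L x * (S.L y)⁻¹}

/-- `Dis^α`: the elements of `Dis(Q)` displacing every point inside its `α`-class. -/
def DisUp (θ : Setoid Q) : Subgroup (Equiv.Perm Q) where
  carrier := {g : Equiv.Perm Q | g ∈ S.Dis ∧ ∀ x : Q, θ.r (g x) x}
  one_mem' := ⟨S.Dis.one_mem, fun x => θ.iseqv.refl x⟩
  mul_mem' := by
    rintro a b ⟨ha, ha2⟩ ⟨hb, hb2⟩
    refine ⟨S.Dis.mul_mem ha hb, fun x => ?_⟩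
    rw [Equiv.Perm.mul_apply]
    exact θ.iseqv.trans (ha2 (b x)) (hb2 x)
  inv_mem' := by
    rintro a ⟨ha, ha2⟩
    refine ⟨S.Dis.inv_mem ha, fun x => ?_⟩
    have h := ha2 (a⁻¹ x)
    rw [show a (a⁻¹ x) = x from a.apply_symm_apply x] at h
    exact θ.iseqv.symm h

end QuandleStr

/-- The orbit equivalence relation of a subgroup of permutations. -/
def orbSetoid {Q : Type*} (N : Subgroup (Equiv.Perm Q)) : Setoid Q where
  r x y := ∃ n ∈ N, n x = y
  iseqv := by
    refine ⟨fun x => ⟨1, N.one_mem, rfl⟩, ?_, ?_⟩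
    · rintro x y ⟨n, hn, rfl⟩
      exact ⟨n⁻¹, N.inv_mem hn, (n.symm_apply_apply x : n⁻¹ (n x) = x)⟩
    · rintro x y z ⟨n, hn, rfl⟩ ⟨m, hm, rfl⟩
      exact ⟨m * n, N.mul_mem hm hn, Equiv.Perm.mul_apply m n x⟩


theorem Equiv.Perm.apply_inv_self {Q : Type*} (f : Equiv.Perm Q) (x : Q) : f (f⁻¹ x) = x :=
  f.apply_symm_apply x

section Aux

namespace QuandleStr

variable {Q : Type*} (S : QuandleStr Q)

lemma L_mem_Lmlt (x : Q) : S.L x ∈ S.Lmlt :=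
  Subgroup.subset_closure ⟨x, rfl⟩

lemma conj_L {g : Equiv.Perm Q} (hg : g ∈ S.Lmlt) :
    ∀ x, g * S.L x * g⁻¹ = S.L (g x) := by
  refine Subgroup.closure_induction (fun a ha => ?_) (fun x => by simp)
    (fun a b ha hb Ha Hb x => ?_) (fun a ha Ha x => ?_) hg
  · obtain ⟨z, rfl⟩ := ha
    intro x
    ext u
    simp only [Equiv.Perm.coe_mul, Function.comp_apply]
    rw [S.selfDistrib z x ((S.L z)⁻¹ u), Equiv.Perm.apply_inv_self]
  · have h : a * b * S.L x * (a * b)⁻¹ = a * (b * S.L x * b⁻¹) * a⁻¹ := by group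
    rw [h, Hb, Ha]
    rfl
  · have h := Ha (a⁻¹ x)
    rw [Equiv.Perm.apply_inv_self] at h
    rw [← h]; group

lemma lmlt_pres {α : Setoid Q} (hc : S.IsCong α) {g : Equiv.Perm Q} (hg : g ∈ S.Lmlt) :
    ∀ x y, α.r x y → α.r (g x) (g y) ∧ α.r (g⁻¹ x) (g⁻¹ y) := by
  refine Subgroup.closure_induction (fun a ha => ?_) (fun x y h => ⟨h, h⟩)
    (fun a b ha hb Ha Hb x y h => ?_) (fun a ha Ha x y h => ?_) hg
  · obtain ⟨z, rfl⟩ := ha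
    intro x y h
    exact hc z z x y (α.iseqv.refl z) h
  · constructor
    · exact (Ha _ _ (Hb x y h).1).1
    · have := (Hb _ _ (Ha x y h).2).2
      simpa [mul_inv_rev] using this
  · refine ⟨(Ha x y h).2, ?_⟩
    simpa using (Ha x y h).1

lemma disC_disp {α : Setoid Q} (hc : S.IsCong α) {n : Equiv.Perm Q}
    (hn : n ∈ S.DisC α.r) : ∀ u, α.r (n u) u := by
  refine Subgroup.closure_induction (fun a ha => ?_) (fun u => α.iseqv.refl u)
    (fun a b ha hb Ha Hb u => ?_) (fun a ha Ha u => ?_) hn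
  · obtain ⟨x, y, hxy, rfl⟩ := ha
    intro u
    have h := (hc x y ((S.L y)⁻¹ u) ((S.L y)⁻¹ u) hxy (α.iseqv.refl _)).1
    rw [Equiv.Perm.apply_inv_self] at h
    exact h
  · exact α.iseqv.trans (Ha (b u)) (Hb u)
  · have h := Ha (a⁻¹ u)
    rw [Equiv.Perm.apply_inv_self] at h
    exact α.iseqv.symm h

lemma disC_le_lmlt (r : Q → Q → Prop) : S.DisC r ≤ S.Lmlt := by
  rw [DisC, Subgroup.closure_le]
  rintro g ⟨x, y, -, rfl⟩
  exact mul_mem (S.L_mem_Lmlt x) (inv_mem (S.L_mem_Lmlt y))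

lemma disC_norm {α : Setoid Q} (hc : S.IsCong α) {g : Equiv.Perm Q} (hg : g ∈ S.Lmlt)
    {n : Equiv.Perm Q} (hn : n ∈ S.DisC α.r) : g * n * g⁻¹ ∈ S.DisC α.r := by
  refine Subgroup.closure_induction (fun a ha => ?_) (by simpa using (S.DisC α.r).one_mem)
    (fun a b ha hb Ha Hb => ?_) (fun a ha Ha => ?_) hn
  · obtain ⟨x, y, hxy, rfl⟩ := ha
    have h : g * (S.L x * (S.L y)⁻¹) * g⁻¹ = S.L (g x) * (S.L (g y))⁻¹ := by
      rw [← conj_L S hg x, ← conj_L S hg y]; group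
    rw [h]
    exact Subgroup.subset_closure ⟨g x, g y, (S.lmlt_pres hc hg x y hxy).1, rfl⟩
  · have h : g * (a * b) * g⁻¹ = (g * a * g⁻¹) * (g * b * g⁻¹) := by group
    rw [h]; exact mul_mem Ha Hb
  · have h : g * a⁻¹ * g⁻¹ = (g * a * g⁻¹)⁻¹ := by group
    rw [h]; exact inv_mem Ha

lemma orb_cong {N : Subgroup (Equiv.Perm Q)} (hN : N ≤ S.Lmlt)
    (hnorm : ∀ g ∈ S.Lmlt, ∀ n ∈ N, g * n * g⁻¹ ∈ N) :
    S.IsCong (orbSetoid N) := by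
  rintro x y u v ⟨n, hn, rfl⟩ ⟨m, hm, rfl⟩
  have hcj := conj_L S (hN hn) x
  constructor
  · refine ⟨n * (S.L x * (n⁻¹ * m) * (S.L x)⁻¹), ?_, ?_⟩
    · exact N.mul_mem hn (hnorm _ (S.L_mem_Lmlt x) _ (N.mul_mem (N.inv_mem hn) hm))
    · rw [← hcj]
      simp [Equiv.Perm.mul_apply]
  · refine ⟨n * ((S.L x)⁻¹ * (n⁻¹ * m) * S.L x), ?_, ?_⟩
    · refine N.mul_mem hn ?_
      have h := hnorm _ (inv_mem (S.L_mem_Lmlt x)) _ (N.mul_mem (N.inv_mem hn) hm)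
      simpa using h
    · rw [← hcj]
      simp [Equiv.Perm.mul_apply, mul_inv_rev]

end QuandleStr

end Aux

theorem stmt7 {Q : Type*} [Finite Q] (S : QuandleStr Q) (hfaith : S.Faithful)
    (α : Setoid Q) (hmin : S.IsMinCong α) :
    (∀ x y : Q, α.r x y ↔ ∃ n ∈ S.DisC α.r, n x = y) ∧
    S.DisC α.r ≠ ⊥ ∧
    S.DisC α.r ≤ S.Lmlt ∧
    (∀ g ∈ S.Lmlt, ∀ n ∈ S.DisC α.r, g * n * g⁻¹ ∈ S.DisC α.r) ∧
    (∀ T : Subgroup (Equiv.Perm Q), T ≤ S.Lmlt →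
      (∀ g ∈ S.Lmlt, ∀ n ∈ T, g * n * g⁻¹ ∈ T) → T < S.DisC α.r → T = ⊥) := by
  obtain ⟨hc, hne, hminimal⟩ := hmin
  have hle : S.DisC α.r ≤ S.Lmlt := S.disC_le_lmlt _
  have hnorm : ∀ g ∈ S.Lmlt, ∀ n ∈ S.DisC α.r, g * n * g⁻¹ ∈ S.DisC α.r :=
    fun g hg n hn => S.disC_norm hc hg hn
  have hOcong : S.IsCong (orbSetoid (S.DisC α.r)) := S.orb_cong hle hnorm
  have hOle : orbSetoid (S.DisC α.r) ≤ α := by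
    rw [Setoid.le_def]
    rintro x y ⟨n, hn, rfl⟩
    exact α.iseqv.symm (S.disC_disp hc hn x)
  have hOeq : orbSetoid (S.DisC α.r) = α := by
    rcases lt_or_eq_of_le hOle with hlt | heq
    · exfalso
      have hObot := hminimal _ hOcong hlt
      have hfix : ∀ n ∈ S.DisC α.r, ∀ u : Q, n u = u := by
        intro n hn u
        have h : (orbSetoid (S.DisC α.r)).r u (n u) := ⟨n, hn, rfl⟩
        rw [hObot] at h
        exact h.symm
      apply hne
      refine le_antisymm ?_ bot_le
      rw [Setoid.le_def]
      intro x y hxy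
      have hL : S.L x = S.L y := by
        ext u
        have h := hfix (S.L x * (S.L y)⁻¹) (Subgroup.subset_closure ⟨x, y, hxy, rfl⟩)
          (S.L y u)
        simpa [Equiv.Perm.mul_apply] using h
      exact hfaith hL
    · exact heq
  refine ⟨?_, ?_, hle, hnorm, ?_⟩
  · intro x y
    constructor
    · intro h; rw [← hOeq] at h; exact h
    · rintro ⟨n, hn, rfl⟩
      exact α.iseqv.symm (S.disC_disp hc hn x)
  · have hxy : ∃ x y : Q, α.r x y ∧ x ≠ y := by
      by_contra h
      push_neg at h
      apply hne
      refine le_antisymm ?_ bot_le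
      rw [Setoid.le_def]
      intro x y hxy
      exact h x y hxy
    obtain ⟨x, y, hxy, hxyne⟩ := hxy
    intro hbot
    have hmem : S.L x * (S.L y)⁻¹ ∈ S.DisC α.r := Subgroup.subset_closure ⟨x, y, hxy, rfl⟩
    rw [hbot, Subgroup.mem_bot] at hmem
    exact hxyne (hfaith (by rwa [mul_inv_eq_one] at hmem))
  · intro T hTle hTnorm hTlt
    have hTcong : S.IsCong (orbSetoid T) := S.orb_cong hTle hTnorm
    have hTle' : orbSetoid T ≤ α := by
      rw [Setoid.le_def]
      rintro x y ⟨t, ht, rfl⟩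
      exact α.iseqv.symm (S.disC_disp hc (hTlt.le ht) x)
    rcases lt_or_eq_of_le hTle' with hlt | heq
    · have hbot := hminimal _ hTcong hlt
      rw [Subgroup.eq_bot_iff_forall]
      intro t ht
      ext u
      have h : (orbSetoid T).r u (t u) := ⟨t, ht, rfl⟩
      rw [hbot] at h
      exact h.symm
    · exfalso
      have hNT : S.DisC α.r ≤ T := by
        rw [QuandleStr.DisC, Subgroup.closure_le]
        rintro g ⟨x, y, hxy, rfl⟩
        rw [← heq] at hxy
        obtain ⟨t, ht, rfl⟩ := hxy
        have hcj := QuandleStr.conj_L S (hTle ht) x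
        have h : S.L x * (S.L (t x))⁻¹ = (S.L x * t * (S.L x)⁻¹) * t⁻¹ := by
          rw [← hcj]; group
        rw [h]
        exact T.mul_mem (hTnorm _ (S.L_mem_Lmlt x) _ ht) (T.inv_mem ht)
      exact absurd hNT (not_le_of_gt hTlt)
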